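/- Let M, K be symmetric positive definite n×n matrices, σ ≥ 0, Δt > 0, and let (P^n) in ℝⁿ satisfy M( (P^{n+1} - 2P^n + P^{n-1})/Δt² + 2σ (P^{n+1} - P^{n-1})/(2Δt) + σ² P^n ) + K P^n = 0. Define K_σ = K + σ² M and E^{n+1/2} = ½( ‖(P^{n+1}-P^n)/Δt‖²_M + ⟨K_σ P^n, P^{n+1}⟩ ). Then (E^{n+1/2} - E^{n-1/2})/Δt = -2σ ‖(P^{n+1} - P^{n-1})/(2Δt)‖²_M ≤ 0; in particular (E^{n+1/2}) is nonincreasing. -/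

import Mathlib

open Matrix

private lemma dot_symm {d : ℕ} {M : Matrix (Fin d) (Fin d) ℝ} (hM : Mᵀ = M)
    (u v : Fin d → ℝ) : M.mulVec u ⬝ᵥ v = M.mulVec v ⬝ᵥ u := by
  have h2 := Matrix.vecMul_transpose (A := M) (x := v)
  rw [hM] at h2
  rw [dotProduct_comm, Matrix.dotProduct_mulVec, h2]

private lemma posdef_transpose {d : ℕ} {M : Matrix (Fin d) (Fin d) ℝ} (hM : M.PosDef) :
    Mᵀ = M := by
  rw [← M.conjTranspose_eq_transpose_of_trivial, hM.isHermitian.eq]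

/-- Discrete energy identity for scheme A with equal constant damping `σ`:
with `K_σ = K + σ²M`, the energy
`Eⁿ⁺¹ᐟ² = ½(‖(Pⁿ⁺¹-Pⁿ)/Δt‖²_M + ⟨K_σ Pⁿ, Pⁿ⁺¹⟩)` satisfies
`(Eⁿ⁺¹ᐟ² - Eⁿ⁻¹ᐟ²)/Δt = -2σ‖(Pⁿ⁺¹-Pⁿ⁻¹)/(2Δt)‖²_M ≤ 0`. -/
theorem schemeA_energy_identity
    {d : ℕ} (M K : Matrix (Fin d) (Fin d) ℝ)
    (hM : M.PosDef) (hK : K.PosDef) (σ Δt : ℝ) (hσ : 0 ≤ σ) (hΔt : 0 < Δt)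
    (P : ℤ → Fin d → ℝ)
    (hrec : ∀ n : ℤ,
      M.mulVec ((Δt ^ 2)⁻¹ • (P (n + 1) - (2 : ℝ) • P n + P (n - 1))
          + (2 * σ) • ((2 * Δt)⁻¹ • (P (n + 1) - P (n - 1)))
          + σ ^ 2 • P n)
        + K.mulVec (P n) = 0)
    (Kσ : Matrix (Fin d) (Fin d) ℝ) (hKσ : Kσ = K + σ ^ 2 • M)
    (E : ℤ → ℝ)
    (hE : ∀ n : ℤ, E n = (1 / 2) *
      ((M.mulVec (Δt⁻¹ • (P (n + 1) - P n)) ⬝ᵥ (Δt⁻¹ • (P (n + 1) - P n)))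
        + (Kσ.mulVec (P n) ⬝ᵥ P (n + 1)))) :
    ∀ n : ℤ,
      (E n - E (n - 1)) / Δt =
        -2 * σ * (M.mulVec ((2 * Δt)⁻¹ • (P (n + 1) - P (n - 1)))
          ⬝ᵥ ((2 * Δt)⁻¹ • (P (n + 1) - P (n - 1))))
      ∧ E n ≤ E (n - 1) := by
  subst hKσ
  have hMt : Mᵀ = M := posdef_transpose hM
  have hKt : Kᵀ = K := posdef_transpose hK
  have hMs := dot_symm hMt
  have hKs := dot_symm hKt
  intro n
  set a := P (n + 1) with ha
  set b := P n with hb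
  set c := P (n - 1) with hc
  -- scalar form of the recurrence, dotted with (a - c)
  have h1 : (M.mulVec ((Δt ^ 2)⁻¹ • (a - (2 : ℝ) • b + c)
          + (2 * σ) • ((2 * Δt)⁻¹ • (a - c)) + σ ^ 2 • b)
        + K.mulVec b) ⬝ᵥ (a - c) = 0 := by
    rw [hrec n]; simp
  have hEn := hE n
  have hEn' := hE (n - 1)
  rw [show n - 1 + 1 = n by ring] at hEn'
  rw [← hb, ← hc] at hEn'
  simp only [Matrix.mulVec_add, Matrix.mulVec_sub, Matrix.mulVec_smul,
    add_dotProduct, sub_dotProduct, smul_dotProduct,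
    dotProduct_add, dotProduct_sub, dotProduct_smul,
    smul_eq_mul, Matrix.add_mulVec, Matrix.smul_mulVec] at h1 hEn hEn' ⊢
  have e2 : (Δt ^ 2)⁻¹ = Δt⁻¹ * Δt⁻¹ := by
    rw [sq, mul_inv]
  have e3 : (2 * Δt)⁻¹ = 2⁻¹ * Δt⁻¹ := by
    rw [mul_inv]
  have ht : Δt⁻¹ * Δt = 1 := inv_mul_cancel₀ hΔt.ne'
  rw [e2, e3] at h1
  rw [e3]
  rw [← ha, ← hb] at hEn
  have key : (E n - E (n - 1)) / Δt =
      -2 * σ * ((2⁻¹ * Δt⁻¹) * ((2⁻¹ * Δt⁻¹) *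
        (M.mulVec a ⬝ᵥ a - M.mulVec a ⬝ᵥ c - (M.mulVec c ⬝ᵥ a - M.mulVec c ⬝ᵥ c)))) := by
    rw [hEn, hEn', div_eq_mul_inv]
    linear_combination (Δt⁻¹ / 2) * h1
      + (Δt⁻¹ ^ 3 / 2) * (hMs b a) + (Δt⁻¹ ^ 3 / 2) * (hMs c b) + (Δt⁻¹ ^ 3 / 2) * (hMs a c)
      + (σ ^ 2 * Δt⁻¹ / 2) * (hMs b c) + (Δt⁻¹ / 2) * (hKs b c)
      + ((E n - E (n - 1)) * Δt⁻¹ * Δt⁻¹ - (E n - E (n - 1)) * Δt⁻¹ * Δt⁻¹) * ht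
  refine ⟨by rw [key]; ring_nf, ?_⟩
  have hQ : 0 ≤ M.mulVec (a - c) ⬝ᵥ (a - c) := by
    have := hM.posSemidef.dotProduct_mulVec_nonneg (a - c)
    simpa [dotProduct_comm] using this
  have hQ' : M.mulVec (a - c) ⬝ᵥ (a - c) =
      M.mulVec a ⬝ᵥ a - M.mulVec a ⬝ᵥ c - (M.mulVec c ⬝ᵥ a - M.mulVec c ⬝ᵥ c) := by
    simp only [Matrix.mulVec_sub, sub_dotProduct, dotProduct_sub]
    ring
  rw [hQ'] at hQ
  have key2 := (div_eq_iff hΔt.ne').mp key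
  nlinarith [mul_nonneg (mul_nonneg hσ hQ) hΔt.le, sq_nonneg Δt⁻¹, mul_pos hΔt hΔt]
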